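/- Let G be a countable torsion-free abelian group that is nontrivial and not isomorphic to ℤ. Then there exists an injective group homomorphism φ : G → (ℝ, +) whose image φ(G) is dense in ℝ. -/

import Mathlib

open Cardinal


/-- A countable torsion-free abelian group which is nontrivial and not isomorphic to `ℤ`
admits an injective group homomorphism into `(ℝ, +)` with dense range. -/
theorem stmt9 {G : Type*} [AddCommGroup G] [Countable G] [Nontrivial G]
    (htf : ∀ g : G, g ≠ 0 → ∀ n : ℕ, 1 ≤ n → n • g ≠ 0)
    (hZ : IsEmpty (G ≃+ ℤ)) :
    ∃ φ : G →+ ℝ, Function.Injective φ ∧ Dense (Set.range φ) := by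
  classical
  -- `G` is a torsion-free `ℤ`-module
  have hns : NoZeroSMulDivisors ℤ G := by
    constructor
    intro c x h
    by_contra hc
    push_neg at hc
    obtain ⟨hc0, hx0⟩ := hc
    rcases lt_or_gt_of_ne hc0 with hlt | hgt
    · have h' : (-c).toNat • x = 0 := by
        have : ((-c).toNat : ℤ) • x = 0 := by
          rw [Int.toNat_of_nonneg (by omega), neg_smul, h, neg_zero]
        rwa [natCast_zsmul] at this
      exact htf x hx0 _ (by omega) h'
    · have h' : c.toNat • x = 0 := by
        have : (c.toNat : ℤ) • x = 0 := by
          rw [Int.toNat_of_nonneg (by omega)]; exact h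
        rwa [natCast_zsmul] at this
      exact htf x hx0 _ (by omega) h'
  -- the rationalization of `G`
  set S := nonZeroDivisors ℤ with hS
  set V := LocalizedModule S G with hV
  letI : Module ℚ V := LocalizedModule.moduleOfIsLocalization
  let ψ : G →+ V := AddMonoidHom.mk' (fun m => LocalizedModule.mk m 1)
    (by
      intro a b
      rw [LocalizedModule.mk_add_mk]
      simp)
  have hι : Function.Injective ψ := by
    intro m m' hmm
    have h1 : LocalizedModule.mk m (1 : S) = LocalizedModule.mk m' (1 : S) := hmm
    rw [LocalizedModule.mk_eq] at h1
    obtain ⟨u, hu⟩ := h1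
    have h2 : (u : ℤ) • m = (u : ℤ) • m' := by
      simpa [Submonoid.smul_def] using hu
    have hu0 : (u : ℤ) ≠ 0 := nonZeroDivisors.ne_zero u.2
    exact smul_right_injective G hu0 h2
  have hVc : Countable V := by
    have hsurj : Function.Surjective (fun p : G × S => LocalizedModule.mk p.1 p.2) := by
      intro x
      induction x using LocalizedModule.induction_on with
      | h m s => exact ⟨(m, s), rfl⟩
    exact hsurj.countable
  -- bases
  let bV := Module.Basis.ofVectorSpace ℚ V
  let bR := Module.Basis.ofVectorSpace ℚ ℝ
  have hcard : Nonempty (Module.Basis.ofVectorSpaceIndex ℚ V ↪ Module.Basis.ofVectorSpaceIndex ℚ ℝ) := by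
    rw [← Cardinal.lift_mk_le']
    have h1 : Cardinal.lift.{0} #(Module.Basis.ofVectorSpaceIndex ℚ V) ≤ Cardinal.aleph0 := by
      have := Cardinal.mk_le_aleph0 (α := Module.Basis.ofVectorSpaceIndex ℚ V)
      calc Cardinal.lift.{0} #(Module.Basis.ofVectorSpaceIndex ℚ V)
          ≤ Cardinal.lift.{0} Cardinal.aleph0 := Cardinal.lift_le.mpr this
        _ = Cardinal.aleph0 := Cardinal.lift_aleph0
    have h2 : #(Module.Basis.ofVectorSpaceIndex ℚ ℝ) = Cardinal.continuum := by
      rw [bR.mk_eq_rank'', Real.rank_rat_real]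
    refine h1.trans ?_
    rw [h2, Cardinal.lift_continuum]
    exact Cardinal.aleph0_le_continuum
  obtain ⟨e⟩ := hcard
  -- the linear embedding of `V` into `ℝ`
  have hli : LinearIndependent ℚ (fun i => bR (e i)) :=
    bR.linearIndependent.comp e e.injective
  let f : V →ₗ[ℚ] ℝ := bV.constr ℚ (fun i => bR (e i))
  have hf : Function.Injective f := by
    rw [← LinearMap.ker_eq_bot, eq_bot_iff]
    intro x hx
    have hx0 : Finsupp.linearCombination ℚ (fun i => bR (e i)) (bV.repr x) = 0 := by
      rw [Finsupp.linearCombination_apply]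
      simpa [f, Module.Basis.constr_apply] using hx
    have hrepr : bV.repr x = 0 := hli (by rw [hx0, map_zero])
    rw [Submodule.mem_bot]
    exact bV.repr.injective (by rw [hrepr, map_zero])
  -- the composed group homomorphism
  set φ : G →+ ℝ := f.toAddMonoidHom.comp ψ with hφ
  have hinj : Function.Injective φ := hf.comp hι
  rcases AddSubgroup.dense_or_cyclic φ.range with hd | ⟨a, ha⟩
  · refine ⟨φ, hinj, ?_⟩
    simpa [AddMonoidHom.coe_range] using hd
  · exfalso
    rw [← AddSubgroup.zmultiples_eq_closure] at ha
    rcases eq_or_ne a 0 with rfl | ha0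
    · obtain ⟨g, hg⟩ := exists_ne (0 : G)
      have hmem : φ g ∈ AddSubgroup.zmultiples (0 : ℝ) := ha ▸ ⟨g, rfl⟩
      obtain ⟨k, hk⟩ := hmem
      have : φ g = 0 := by simpa using hk.symm
      exact hg (hinj (by rw [this, map_zero]))
    · have hψ : Function.Injective (zmultiplesHom ℝ a) := by
        intro m n h
        have h' : (m : ℝ) * a = (n : ℝ) * a := by
          simpa [zmultiplesHom_apply, zsmul_eq_mul] using h
        exact_mod_cast mul_right_cancel₀ ha0 h'
      have hrange : φ.range = (zmultiplesHom ℝ a).range := by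
        rw [AddSubgroup.range_zmultiplesHom, ha]
      exact hZ.false <|
        (AddMonoidHom.ofInjective hinj).trans
          ((AddEquiv.addSubgroupCongr hrange).trans (AddMonoidHom.ofInjective hψ).symm)
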